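/- arXiv:1307.4114 — 3 statements merged into one kernel-verified Lean document; each statement's English description precedes it below -/
import Mathlib

section
/- The formal power series identity $\prod_{n=1}^{\infty}(1-q^n)^3 = \sum_{n\in\mathbb{Z}} (4n+1) q^{n(2n+1)}$ holds (Jacobi's identity for the cube of the Euler product). -/
open PowerSeries Finset

noncomputable section

abbrev Rz := PowerSeries ℤ

noncomputable def gb : ℕ → ℕ → Rz
  | 0, 0 => 1
  | 0, _+1 => 0
  | _+1, 0 => 1
  | n+1, k+1 => gb n (k+1) + (PowerSeries.X)^(n-k) * gb n k

lemma gb_zero_right (n : ℕ) : gb n 0 = 1 := by cases n <;> rfl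

lemma gb_succ_succ (n k : ℕ) : gb (n+1) (k+1) = gb n (k+1) + (PowerSeries.X)^(n-k) * gb n k := rfl

lemma gb_of_lt : ∀ n k, n < k → gb n k = 0 := by
  intro n
  induction n with
  | zero => intro k h; cases k with
    | zero => omega
    | succ k => rfl
  | succ n ih => intro k h; cases k with
    | zero => omega
    | succ k => rw [gb_succ_succ, ih _ (by omega), ih _ (by omega)]; ring

lemma gb_one (n : ℕ) : gb n 1 = ∑ i ∈ range n, (PowerSeries.X : Rz)^i := by
  induction n with
  | zero => simp [gb]
  | succ n ih => rw [gb_succ_succ, ih, gb_zero_right, Finset.sum_range_succ]; simp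

lemma gb_pascal2 : ∀ n k, gb (n+1) (k+1) = (PowerSeries.X)^(k+1) * gb n (k+1) + gb n k := by
  intro n
  induction n with
  | zero =>
    intro k; cases k with
    | zero => simp [gb]
    | succ k =>
      rw [gb_succ_succ, show gb 0 (k+1+1) = 0 from rfl, show gb 0 (k+1) = 0 from rfl]
      ring
  | succ n ih =>
    intro k
    cases k with
    | zero =>
      rw [gb_succ_succ, gb_zero_right, gb_one]
      have h : (PowerSeries.X : Rz) ^ (0+1) * ∑ i ∈ range (n+1), (PowerSeries.X:Rz)^i
          = ∑ i ∈ range (n+1), (PowerSeries.X:Rz)^(i+1) := by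
        rw [Finset.mul_sum]; apply Finset.sum_congr rfl; intro i _; rw [← pow_add]; ring_nf
      rw [h]
      have l : ∑ i ∈ range (n+2), (PowerSeries.X:Rz)^i = (∑ i ∈ range (n+1), (PowerSeries.X:Rz)^(i+1)) + 1 := by
        rw [Finset.sum_range_succ']; simp
      have r : ∑ i ∈ range (n+2), (PowerSeries.X:Rz)^i = (∑ i ∈ range (n+1), (PowerSeries.X:Rz)^i) + (PowerSeries.X:Rz)^(n+1) :=
        Finset.sum_range_succ _ _
      simp only [Nat.sub_zero, mul_one]
      rw [← r, l]
    | succ k =>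
      have hD : gb (n+1) (k+1+1) = gb n (k+1+1) + (PowerSeries.X)^(n-(k+1)) * gb n (k+1) :=
        gb_succ_succ n (k+1)
      have hE : gb (n+1) (k+1) = gb n (k+1) + (PowerSeries.X)^(n-k) * gb n k :=
        gb_succ_succ n k
      rw [gb_succ_succ (n+1) (k+1)]
      nth_rewrite 2 [hD]
      nth_rewrite 2 [hE]
      rw [ih (k+1), ih k]
      by_cases hk : k + 1 ≤ n
      · have hx : (PowerSeries.X : Rz)^(n+1-(k+1)) * (PowerSeries.X)^(k+1) = (PowerSeries.X)^(n+1) := by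
          rw [← pow_add]; congr 1; omega
        have hy : (PowerSeries.X : Rz)^(k+1+1) * (PowerSeries.X)^(n-(k+1)) = (PowerSeries.X)^(n+1) := by
          rw [← pow_add]; congr 1; omega
        calc (PowerSeries.X:Rz) ^ (k + 1 + 1) * gb n (k + 1 + 1) + gb n (k+1) +
              PowerSeries.X ^ (n + 1 - (k + 1)) * (PowerSeries.X ^ (k + 1) * gb n (k + 1) + gb n k)
            = PowerSeries.X ^ (k + 1 + 1) * gb n (k + 1 + 1) + gb n (k+1) +
              ((PowerSeries.X:Rz)^(n+1-(k+1)) * (PowerSeries.X)^(k+1)) * gb n (k + 1) +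
              PowerSeries.X ^ (n + 1 - (k + 1)) * gb n k := by ring
          _ = PowerSeries.X ^ (k + 1 + 1) * gb n (k + 1 + 1) + gb n (k+1) +
              ((PowerSeries.X:Rz)^(k+1+1) * (PowerSeries.X)^(n-(k+1))) * gb n (k + 1) +
              PowerSeries.X ^ (n - k) * gb n k := by
                rw [hx, hy, show n+1-(k+1) = n-k from by omega]
          _ = _ := by ring
      · have e1 : gb n (k+1) = 0 := gb_of_lt _ _ (by omega)
        have e2 : gb n (k+1+1) = 0 := gb_of_lt _ _ (by omega)
        rw [e1, e2, show n+1-(k+1) = n - k from by omega]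
        ring

lemma gb_self : ∀ n, gb n n = 1 := by
  intro n; induction n with
  | zero => exact gb_zero_right 0
  | succ n ih => rw [gb_succ_succ, gb_of_lt n (n+1) (by omega), ih]; simp

noncomputable def Ep (m : ℕ) : Rz := ∏ j ∈ Icc 1 m, (1 - (PowerSeries.X:Rz)^j)

lemma Ep_succ (m : ℕ) : Ep (m+1) = Ep m * (1 - (PowerSeries.X:Rz)^(m+1)) := by
  unfold Ep; rw [Finset.prod_Icc_succ_top (by omega)]

lemma prodIcc_bot {a n : ℕ} (h : a ≤ n) (f : ℕ → Rz) :
    ∏ j ∈ Icc a n, f j = f a * ∏ j ∈ Icc (a+1) n, f j := by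
  rw [← Finset.Ico_add_one_right_eq_Icc, ← Finset.Ico_add_one_right_eq_Icc, Finset.prod_eq_prod_Ico_succ_bot (by omega)]

lemma Ep_mul_gb : ∀ n i, Ep i * gb n i =
    if i ≤ n then ∏ j ∈ Icc (n+1-i) n, (1 - (PowerSeries.X:Rz)^j) else 0 := by
  intro n
  induction n with
  | zero =>
    intro i
    match i with
    | 0 => simp [Ep, gb_zero_right]
    | i+1 => rw [gb_of_lt 0 (i+1) (by omega)]; simp
  | succ n ih =>
    intro i
    match i with
    | 0 =>
      rw [gb_zero_right]
      simp [Ep, show Icc (n+1+1-0) (n+1) = ∅ from Finset.Icc_eq_empty (by omega)]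
    | k+1 =>
      by_cases hk : k + 1 ≤ n
      · have A : Ep (k+1) * gb n (k+1) = ∏ j ∈ Icc (n-k) n, (1 - (PowerSeries.X:Rz)^j) := by
          rw [ih (k+1), if_pos hk, show n+1-(k+1) = n-k from by omega]
        have B : Ep k * gb n k = ∏ j ∈ Icc (n+1-k) n, (1 - (PowerSeries.X:Rz)^j) := by
          rw [ih k, if_pos (by omega)]
        have C : ∏ j ∈ Icc (n-k) n, (1 - (PowerSeries.X:Rz)^j)
            = (1 - (PowerSeries.X:Rz)^(n-k)) * ∏ j ∈ Icc (n+1-k) n, (1 - (PowerSeries.X:Rz)^j) := by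
          rw [prodIcc_bot (show n-k ≤ n from by omega), show n-k+1 = n+1-k from by omega]
        have hxp : (PowerSeries.X:Rz)^(n-k) * (PowerSeries.X:Rz)^(k+1) = (PowerSeries.X:Rz)^(n+1) := by
          rw [← pow_add]; congr 1; omega
        rw [if_pos (show k+1 ≤ n+1 from by omega), show n+1+1-(k+1) = n+1-k from by omega,
          Finset.prod_Icc_succ_top (show n+1-k ≤ n+1 from by omega)]
        calc Ep (k+1) * gb (n+1) (k+1)
            = Ep (k+1) * gb n (k+1)
              + (PowerSeries.X:Rz)^(n-k) * ((1 - (PowerSeries.X:Rz)^(k+1)) * (Ep k * gb n k)) := by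
                rw [gb_succ_succ, Ep_succ]; ring
          _ = (1 - (PowerSeries.X:Rz)^(n-k)) * (∏ j ∈ Icc (n+1-k) n, (1 - (PowerSeries.X:Rz)^j))
              + (PowerSeries.X:Rz)^(n-k) * ((1 - (PowerSeries.X:Rz)^(k+1)) * ∏ j ∈ Icc (n+1-k) n, (1 - (PowerSeries.X:Rz)^j)) := by
                rw [A, C, B]
          _ = (1 - (PowerSeries.X:Rz)^(n-k) * (PowerSeries.X:Rz)^(k+1)) * ∏ j ∈ Icc (n+1-k) n, (1 - (PowerSeries.X:Rz)^j) := by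
                ring
          _ = _ := by rw [hxp]; ring
      · by_cases hk2 : k + 1 ≤ n + 1
        · have hkn : k = n := by omega
          subst hkn
          rw [gb_succ_succ, gb_of_lt k (k+1) (by omega), gb_self, if_pos hk2]
          simp [show k+1+1-(k+1) = 1 from by omega, Ep]
        · rw [gb_of_lt (n+1) (k+1) (by omega), if_neg hk2]; simp

noncomputable def tt (k : ℤ) : ℕ := (k*(k+1)/2).toNat

lemma tt_mul_nonneg (k : ℤ) : 0 ≤ k * (k+1) := by
  rcases le_or_gt 0 k with h | h
  · positivity
  · nlinarith

lemma tt_cast (k : ℤ) : (tt k : ℤ) * 2 = k*(k+1) := by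
  have he : (2:ℤ) ∣ k*(k+1) := (Int.even_mul_succ_self k).two_dvd
  rw [tt, Int.toNat_of_nonneg (Int.ediv_nonneg (tt_mul_nonneg k) (by norm_num))]
  exact Int.ediv_mul_cancel he

lemma coeff_eq_of_dvd {a b : Rz} {c j : ℕ} (h : (PowerSeries.X:Rz)^c ∣ a - b) (hj : j < c) :
    PowerSeries.coeff (R := ℤ) j a = PowerSeries.coeff (R := ℤ) j b := by
  have := (PowerSeries.X_pow_dvd_iff.mp h) j hj
  rw [map_sub, sub_eq_zero] at this
  exact this

lemma prod_one_sub_dvd {s : Finset ℕ} {c : ℕ} (h : ∀ l ∈ s, c ≤ l) :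
    (PowerSeries.X:Rz)^c ∣ (∏ l ∈ s, (1 - (PowerSeries.X:Rz)^l)) - 1 := by
  classical
  induction s using Finset.induction with
  | empty => simp
  | @insert a s ha ih =>
    rw [Finset.prod_insert ha]
    have h1 : (PowerSeries.X:Rz)^c ∣ (∏ l ∈ s, (1 - (PowerSeries.X:Rz)^l)) - 1 :=
      ih (fun l hl => h l (Finset.mem_insert_of_mem hl))
    have h2 : (PowerSeries.X:Rz)^c ∣ (PowerSeries.X:Rz)^a :=
      pow_dvd_pow _ (h a (Finset.mem_insert_self a s))
    have : (1 - (PowerSeries.X:Rz)^a) * (∏ l ∈ s, (1 - (PowerSeries.X:Rz)^l)) - 1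
        = ((∏ l ∈ s, (1 - (PowerSeries.X:Rz)^l)) - 1)
          - (PowerSeries.X:Rz)^a * (∏ l ∈ s, (1 - (PowerSeries.X:Rz)^l)) := by ring
    rw [this]
    exact dvd_sub h1 (h2.mul_right _)

lemma Ep_split {a b : ℕ} (h : a ≤ b) :
    Ep b = Ep a * ∏ j ∈ Icc (a+1) b, (1 - (PowerSeries.X:Rz)^j) := by
  unfold Ep
  rw [← Finset.Ico_add_one_right_eq_Icc, ← Finset.Ico_add_one_right_eq_Icc, ← Finset.Ico_add_one_right_eq_Icc,
    ← Finset.prod_Ico_consecutive _ (by omega : 1 ≤ a+1) (by omega : a+1 ≤ b+1)]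

-- Claim D
lemma coeff_Ep_gb (m i j : ℕ) (hi : i ≤ 2*m) (hj1 : j ≤ i) (hj2 : j ≤ 2*m - i) :
    PowerSeries.coeff (R := ℤ) j (Ep m * gb (2*m) i) = if j = 0 then 1 else 0 := by
  have hT : Ep i * gb (2*m) i = ∏ l ∈ Icc (2*m+1-i) (2*m), (1 - (PowerSeries.X:Rz)^l) :=
    (Ep_mul_gb (2*m) i).trans (if_pos hi)
  have hTd : (PowerSeries.X:Rz)^(2*m+1-i) ∣ (∏ l ∈ Icc (2*m+1-i) (2*m), (1 - (PowerSeries.X:Rz)^l)) - 1 :=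
    prod_one_sub_dvd (fun l hl => (Finset.mem_Icc.mp hl).1)
  have step2 : PowerSeries.coeff (R := ℤ) j (Ep i * gb (2*m) i) = if j = 0 then 1 else 0 := by
    rw [hT]
    have := coeff_eq_of_dvd hTd (show j < 2*m+1-i from by omega)
    rw [this, PowerSeries.coeff_one]
  rcases le_or_gt i m with him | him
  · have hsp := Ep_split him
    have hd : (PowerSeries.X:Rz)^(i+1) ∣ Ep m * gb (2*m) i - Ep i * gb (2*m) i := by
      have : Ep m * gb (2*m) i - Ep i * gb (2*m) i
          = (Ep i * gb (2*m) i) * ((∏ l ∈ Icc (i+1) m, (1 - (PowerSeries.X:Rz)^l)) - 1) := by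
        rw [hsp]; ring
      rw [this]
      exact Dvd.dvd.mul_left (prod_one_sub_dvd (fun l hl => (Finset.mem_Icc.mp hl).1)) _
    rw [coeff_eq_of_dvd hd (by omega), step2]
  · have hsp := Ep_split him.le
    have hd : (PowerSeries.X:Rz)^(m+1) ∣ Ep m * gb (2*m) i - Ep i * gb (2*m) i := by
      have : Ep m * gb (2*m) i - Ep i * gb (2*m) i
          = - ((Ep m * gb (2*m) i) * ((∏ l ∈ Icc (m+1) i, (1 - (PowerSeries.X:Rz)^l)) - 1)) := by
        rw [hsp]; ring
      rw [this]
      exact ((prod_one_sub_dvd (fun l hl => (Finset.mem_Icc.mp hl).1)).mul_left _).neg_right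
    rw [coeff_eq_of_dvd hd (by omega), step2]

lemma tt_succ (k : ℤ) : (tt (k+1) : ℤ) * 2 = (tt k) * 2 + 2*k + 2 := by
  rw [tt_cast, tt_cast]; ring

lemma tt_pred (k : ℤ) : (tt (k-1) : ℤ) * 2 = (tt k) * 2 - 2*k := by
  rw [tt_cast, tt_cast]; ring

-- double Pascal
lemma gb_dp (m i : ℕ) (hi : i ≤ 2*m) :
    gb (2*m+2) (i+2) = (1 + (PowerSeries.X:Rz)^(2*m+1)) * gb (2*m) (i+1)
      + (PowerSeries.X:Rz)^(i+2) * gb (2*m) (i+2)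
      + (PowerSeries.X:Rz)^(2*m-i) * gb (2*m) i := by
  have h1 : gb (2*m+2) (i+2) = gb (2*m+1) (i+2) + (PowerSeries.X:Rz)^(2*m-i) * gb (2*m+1) (i+1) := by
    have := gb_succ_succ (2*m+1) (i+1)
    rw [show 2*m+1-(i+1) = 2*m-i from by omega] at this
    exact this
  have h2 : gb (2*m+1) (i+2) = (PowerSeries.X:Rz)^(i+2) * gb (2*m) (i+2) + gb (2*m) (i+1) :=
    gb_pascal2 (2*m) (i+1)
  have h3 : gb (2*m+1) (i+1) = (PowerSeries.X:Rz)^(i+1) * gb (2*m) (i+1) + gb (2*m) i :=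
    gb_pascal2 (2*m) i
  have hxp : (PowerSeries.X:Rz)^(2*m-i) * (PowerSeries.X:Rz)^(i+1) = (PowerSeries.X:Rz)^(2*m+1) := by
    rw [← pow_add]; congr 1; omega
  rw [h1, h2, h3]
  linear_combination gb (2*m) (i+1) * hxp

noncomputable def cf (m i : ℕ) : Rz :=
  (-1)^(m+i) * gb (2*m) i * (PowerSeries.X)^(tt ((i:ℤ) - m))

noncomputable def Pj (m : ℕ) : Polynomial Rz :=
  ∏ j ∈ Icc 1 m, ((1 - Polynomial.C ((PowerSeries.X:Rz)^j) * Polynomial.X)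
    * (Polynomial.X - Polynomial.C ((PowerSeries.X:Rz)^(j-1))))

lemma coeff_Pj : ∀ m i, (Pj m).coeff i = cf m i := by
  intro m
  induction m with
  | zero =>
    intro i
    have : Pj 0 = 1 := by unfold Pj; simp
    rw [this, Polynomial.coeff_one]
    match i with
    | 0 => simp [cf, gb_zero_right, tt]
    | i+1 => rw [if_neg (by omega), cf, gb_of_lt 0 (i+1) (by omega)]; ring
  | succ m ih =>
    intro i
    have hP : Pj (m+1) = Pj m * ((1 - Polynomial.C ((PowerSeries.X:Rz)^(m+1)) * Polynomial.X)
        * (Polynomial.X - Polynomial.C ((PowerSeries.X:Rz)^m))) := by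
      unfold Pj
      rw [Finset.prod_Icc_succ_top (by omega : 1 ≤ m+1)]
      norm_num
    have hcc : (Polynomial.C ((PowerSeries.X:Rz)^(m+1)) * Polynomial.C ((PowerSeries.X:Rz)^m)) =
        Polynomial.C ((PowerSeries.X:Rz)^(2*m+1)) := by
      rw [← map_mul, ← pow_add, show m+1+m = 2*m+1 from by omega]
    have expand : Pj (m+1) = Polynomial.C (1 + (PowerSeries.X:Rz)^(2*m+1)) * (Pj m * Polynomial.X)
        - Polynomial.C ((PowerSeries.X:Rz)^m) * Pj m
        - Polynomial.C ((PowerSeries.X:Rz)^(m+1)) * (Pj m * Polynomial.X^2) := by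
      rw [hP, map_add, map_one]
      linear_combination (Pj m * Polynomial.X) * hcc
    have c1 : (Pj m * Polynomial.X).coeff i = if 1 ≤ i then cf m (i-1) else 0 := by
      rw [show (Polynomial.X : Polynomial Rz) = Polynomial.X^1 from (pow_one _).symm,
        Polynomial.coeff_mul_X_pow']
      split_ifs <;> simp [ih]
    have c2 : (Pj m * Polynomial.X^2).coeff i = if 2 ≤ i then cf m (i-2) else 0 := by
      rw [Polynomial.coeff_mul_X_pow']
      split_ifs <;> simp [ih]
    rw [expand, Polynomial.coeff_sub, Polynomial.coeff_sub, Polynomial.coeff_C_mul,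
      Polynomial.coeff_C_mul, Polynomial.coeff_C_mul, c1, c2, ih]
    -- now pure power series identity
    match i with
    | 0 =>
      rw [if_neg (by omega), if_neg (by omega)]
      unfold cf
      rw [gb_zero_right, gb_zero_right]
      have e1 : m + tt ((0:ℤ) - m) = tt ((0:ℤ) - (m+1)) := by
        have h1 := tt_succ ((0:ℤ) - (m+1))
        have h2 : (0:ℤ) - (m+1) + 1 = 0 - m := by ring
        rw [h2] at h1
        omega
      have hE : (PowerSeries.X:Rz)^(m + tt ((0:ℤ) - m)) = (PowerSeries.X:Rz)^(tt ((0:ℤ) - (m+1))) := by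
        rw [e1]
      rw [pow_add] at hE
      push_cast
      linear_combination ((-1:Rz))^(m+1) * hE
    | 1 =>
      rw [if_pos (by omega), if_neg (by omega)]
      unfold cf
      rw [gb_zero_right]
      have hG : gb (2*m+2) 1 = 1 + (PowerSeries.X:Rz)^(2*m+1) + (PowerSeries.X:Rz) * gb (2*m) 1 := by
        have h1 := gb_succ_succ (2*m+1) 0
        have h2 := gb_pascal2 (2*m) 0
        rw [gb_zero_right] at h1 h2
        rw [h1, h2, show 2*m+1-0 = 2*m+1 from rfl]
        ring
      have e1 : m + tt ((1:ℤ) - m) = 1 + tt ((0:ℤ) - m) := by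
        have h1 := tt_succ ((0:ℤ) - m)
        have h2 : (0:ℤ) - m + 1 = 1 - m := by ring
        rw [h2] at h1
        omega
      have hE : (PowerSeries.X:Rz)^m * (PowerSeries.X:Rz)^(tt ((1:ℤ) - m))
          = (PowerSeries.X:Rz) * (PowerSeries.X:Rz)^(tt ((0:ℤ) - m)) := by
        rw [← pow_add, e1, pow_add, pow_one]
      push_cast
      rw [show (1:ℤ) - ((m:ℤ)+1) = 0 - m from by ring, show 2*(m+1) = 2*m+2 from by ring, hG]
      linear_combination ((-1:Rz))^m * gb (2*m) 1 * hE
    | (i+2) =>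
      by_cases hi : i ≤ 2*m
      · rw [if_pos (by omega), if_pos (by omega)]
        unfold cf
        have hDP := gb_dp m i hi
        have eA : m + tt (((i:ℤ)+1-m)+1) = (i+2) + tt ((i:ℤ)+1-m) := by
          have h1 := tt_succ ((i:ℤ)+1-m)
          omega
        have eB : (m+1) + tt (((i:ℤ)+1-m)-1) = (2*m-i) + tt ((i:ℤ)+1-m) := by
          have h1 := tt_pred ((i:ℤ)+1-m)
          omega
        have hA : (PowerSeries.X:Rz)^m * (PowerSeries.X:Rz)^(tt (((i:ℤ)+1-m)+1))
            = (PowerSeries.X:Rz)^(i+2) * (PowerSeries.X:Rz)^(tt ((i:ℤ)+1-m)) := by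
          rw [← pow_add, ← pow_add, eA]
        have hB : (PowerSeries.X:Rz)^(m+1) * (PowerSeries.X:Rz)^(tt (((i:ℤ)+1-m)-1))
            = (PowerSeries.X:Rz)^(2*m-i) * (PowerSeries.X:Rz)^(tt ((i:ℤ)+1-m)) := by
          rw [← pow_add, ← pow_add, eB]
        rw [show i+2-1 = i+1 from rfl, show i+2-2 = i from rfl, show 2*(m+1) = 2*m+2 from by ring]
        push_cast
        rw [show ((i:ℤ)+1) - ((m:ℤ)) = ((i:ℤ)+1-m) from by ring,
          show ((i:ℤ)+2) - ((m:ℤ)) = ((i:ℤ)+1-m)+1 from by ring,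
          show ((i:ℤ)) - ((m:ℤ)) = ((i:ℤ)+1-m)-1 from by ring,
          show ((i:ℤ)+2) - ((m:ℤ)+1) = ((i:ℤ)+1-m) from by ring, hDP]
        linear_combination ((-1:Rz))^(m+i+1) * gb (2*m) (i+2) * hA
          + ((-1:Rz))^(m+i+1) * gb (2*m) i * hB
      · rw [if_pos (by omega), if_pos (by omega)]
        unfold cf
        rw [show i+2-1 = i+1 from rfl, show i+2-2 = i from rfl]
        rw [gb_of_lt (2*m) (i+2) (by omega), gb_of_lt (2*m) (i+1) (by omega),
          gb_of_lt (2*(m+1)) (i+2) (by omega), gb_of_lt (2*m) i (by omega)]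
        ring

lemma prodIcc_bot' {a n : ℕ} (h : a ≤ n) (f : ℕ → Polynomial Rz) :
    ∏ j ∈ Icc a n, f j = f a * ∏ j ∈ Icc (a+1) n, f j := by
  rw [← Finset.Ico_add_one_right_eq_Icc, ← Finset.Ico_add_one_right_eq_Icc, Finset.prod_eq_prod_Ico_succ_bot (by omega)]

lemma Pj_sum_form (m : ℕ) :
    Pj m = ∑ i ∈ range (2*m+1), Polynomial.C (cf m i) * Polynomial.X^i := by
  apply Polynomial.ext
  intro n
  rw [coeff_Pj, Polynomial.finset_sum_coeff]
  simp only [Polynomial.coeff_C_mul, Polynomial.coeff_X_pow, mul_ite, mul_one, mul_zero]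
  by_cases hn : n ∈ range (2*m+1)
  · rw [Finset.sum_ite_eq (range (2*m+1)) n (fun i => cf m i), if_pos hn]
  · rw [Finset.sum_ite_eq (range (2*m+1)) n (fun i => cf m i), if_neg hn]
    unfold cf
    rw [gb_of_lt (2*m) n (by simp at hn; omega)]
    ring

lemma sumA (m : ℕ) (hm : 1 ≤ m) : ∑ i ∈ range (2*m+1), cf m i = 0 := by
  have h1 : Polynomial.eval 1 (Pj m) = 0 := by
    unfold Pj
    rw [Polynomial.eval_prod]
    apply Finset.prod_eq_zero (Finset.mem_Icc.mpr ⟨le_refl 1, hm⟩)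
    simp
  have h2 : Polynomial.eval 1 (Pj m) = ∑ i ∈ range (2*m+1), cf m i := by
    rw [Pj_sum_form, Polynomial.eval_finset_sum]
    simp
  rw [← h2, h1]

lemma prod_shift (M : ℕ) :
    ∏ j ∈ Icc 2 (M+1), (1 - (PowerSeries.X:Rz)^(j-1)) = ∏ j ∈ Icc 1 M, (1 - (PowerSeries.X:Rz)^j) := by
  induction M with
  | zero => simp
  | succ M ih =>
    rw [Finset.prod_Icc_succ_top (by omega : 2 ≤ M+1+1), ih,
      Finset.prod_Icc_succ_top (by omega : 1 ≤ M+1)]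
    norm_num

lemma sumB (M : ℕ) :
    ∑ i ∈ range (2*(M+1)+1), cf (M+1) i * (i : Rz) = Ep (M+1) * Ep M := by
  have key : Polynomial.eval 1 (Polynomial.derivative (Pj (M+1))) = Ep (M+1) * Ep M := by
    have hsplit : Pj (M+1) = ((1 - Polynomial.C ((PowerSeries.X:Rz)^1) * Polynomial.X)
        * (Polynomial.X - Polynomial.C ((PowerSeries.X:Rz)^(1-1))))
        * ∏ j ∈ Icc 2 (M+1), ((1 - Polynomial.C ((PowerSeries.X:Rz)^j) * Polynomial.X)
          * (Polynomial.X - Polynomial.C ((PowerSeries.X:Rz)^(j-1)))) := by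
      unfold Pj
      exact prodIcc_bot' (by omega) _
    rw [hsplit, Polynomial.derivative_mul, Polynomial.eval_add, Polynomial.eval_mul,
      Polynomial.eval_mul]
    have hF0 : Polynomial.eval 1 ((1 - Polynomial.C ((PowerSeries.X:Rz)^1) * Polynomial.X)
        * (Polynomial.X - Polynomial.C ((PowerSeries.X:Rz)^(1-1)))) = 0 := by
      simp
    rw [hF0, zero_mul, add_zero]
    have hF' : Polynomial.eval 1 (Polynomial.derivative
        ((1 - Polynomial.C ((PowerSeries.X:Rz)^1) * Polynomial.X)
        * (Polynomial.X - Polynomial.C ((PowerSeries.X:Rz)^(1-1))))) = 1 - (PowerSeries.X:Rz) := by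
      rw [Polynomial.derivative_mul]
      simp
    rw [hF']
    have hG : Polynomial.eval 1 (∏ j ∈ Icc 2 (M+1), ((1 - Polynomial.C ((PowerSeries.X:Rz)^j) * Polynomial.X)
        * (Polynomial.X - Polynomial.C ((PowerSeries.X:Rz)^(j-1)))))
        = (∏ j ∈ Icc 2 (M+1), (1 - (PowerSeries.X:Rz)^j)) * ∏ j ∈ Icc 1 M, (1 - (PowerSeries.X:Rz)^j) := by
      rw [Polynomial.eval_prod, ← prod_shift M, ← Finset.prod_mul_distrib]
      apply Finset.prod_congr rfl
      intro j _
      simp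
    rw [hG]
    have : Ep (M+1) = (1 - (PowerSeries.X:Rz)) * ∏ j ∈ Icc 2 (M+1), (1 - (PowerSeries.X:Rz)^j) := by
      unfold Ep
      rw [prodIcc_bot (by omega)]
      norm_num
    rw [this, Ep]
    ring
  rw [Pj_sum_form (M+1)] at key
  rw [← key, Polynomial.derivative_sum]
  rw [Polynomial.eval_finset_sum]
  apply Finset.sum_congr rfl
  intro i _
  rw [Polynomial.derivative_C_mul_X_pow, Polynomial.eval_mul, Polynomial.eval_C, Polynomial.eval_pow,
    Polynomial.eval_X, one_pow, mul_one]

lemma coeff_intCast_mul (z : ℤ) (v : Rz) (N : ℕ) :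
    PowerSeries.coeff (R := ℤ) N ((z:Rz) * v) = z * PowerSeries.coeff (R := ℤ) N v := by
  rw [← zsmul_eq_mul, map_zsmul, smul_eq_mul]

lemma term_eq (N i : ℕ) (hi : i ≤ 2*(N+1)) :
    PowerSeries.coeff (R := ℤ) N (Ep (N+1) * (((2*(i:ℤ) - (2*(N+1)+1) : ℤ):Rz) * cf (N+1) i))
      = (2*(i:ℤ) - (2*(N+1)+1)) * (-1:ℤ)^((N+1)+i)
        * (if tt ((i:ℤ)-(N+1)) = N then 1 else 0) := by
  have hstep : Ep (N+1) * (((2*(i:ℤ) - (2*(N+1)+1) : ℤ):Rz) * cf (N+1) i)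
      = (((2*(i:ℤ) - (2*(N+1)+1)) * (-1:ℤ)^((N+1)+i) : ℤ) : Rz)
        * ((PowerSeries.X:Rz)^(tt ((i:ℤ)-(N+1))) * (Ep (N+1) * gb (2*(N+1)) i)) := by
    unfold cf
    push_cast
    ring
  rw [hstep, coeff_intCast_mul, PowerSeries.coeff_X_pow_mul']
  by_cases hle : tt ((i:ℤ)-(N+1)) ≤ N
  · rw [if_pos hle]
    have hq := tt_cast ((i:ℤ)-(N+1))
    have h0 : 0 ≤ ((i:ℤ)-N)*((i:ℤ)-N+1) := tt_mul_nonneg ((i:ℤ)-N)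
    have h1 : 0 ≤ ((i:ℤ)-N-2)*((i:ℤ)-N-1) := by
      have := tt_mul_nonneg ((i:ℤ)-N-2)
      convert this using 2
      ring
    have hj1 : N - tt ((i:ℤ)-(N+1)) ≤ i := by
      suffices h : (N:ℤ) ≤ tt ((i:ℤ)-(N+1)) + i by omega
      nlinarith
    have hj2 : N - tt ((i:ℤ)-(N+1)) ≤ 2*(N+1) - i := by
      suffices h : (N:ℤ) + i ≤ tt ((i:ℤ)-(N+1)) + 2*(N+1) by omega
      nlinarith
    rw [coeff_Ep_gb (N+1) i _ hi hj1 hj2]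
    congr 1
    by_cases he : tt ((i:ℤ)-(N+1)) = N
    · rw [if_pos (by omega), if_pos he]
    · rw [if_neg (by omega), if_neg he]
  · rw [if_neg hle, if_neg (by omega), mul_zero]

lemma coeff_combined (N : ℕ) : 2 * PowerSeries.coeff (R := ℤ) N (Ep (N+1)^3)
    = ∑ i ∈ range (2*(N+1)+1), (2*(i:ℤ) - (2*(N+1)+1)) * (-1:ℤ)^((N+1)+i)
        * (if tt ((i:ℤ)-(N+1)) = N then 1 else 0) := by
  have hsum : ∑ i ∈ range (2*(N+1)+1), ((2*(i:ℤ) - (2*(N+1)+1) : ℤ):Rz) * cf (N+1) i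
      = 2 * (Ep (N+1) * Ep N) := by
    have hc : ∀ i ∈ range (2*(N+1)+1), ((2*(i:ℤ) - (2*(N+1)+1) : ℤ):Rz) * cf (N+1) i
        = 2 * (cf (N+1) i * (i:Rz)) - ((2*(N+1)+1 : ℕ):Rz) * cf (N+1) i := by
      intro i _
      push_cast
      ring
    rw [Finset.sum_congr rfl hc, Finset.sum_sub_distrib, ← Finset.mul_sum, ← Finset.mul_sum,
      sumB N, sumA (N+1) (by omega)]
    ring
  have hmul : Ep (N+1) * (∑ i ∈ range (2*(N+1)+1), ((2*(i:ℤ) - (2*(N+1)+1) : ℤ):Rz) * cf (N+1) i)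
      = 2 * (Ep (N+1) * (Ep (N+1) * Ep N)) := by rw [hsum]; ring
  have e3 : Ep (N+1)^3 = Ep (N+1) * (Ep (N+1) * Ep N)
      - (PowerSeries.X:Rz)^(N+1) * (Ep (N+1) * (Ep (N+1) * Ep N)) := by
    have hEm := Ep_succ N
    linear_combination (Ep (N+1) * Ep (N+1)) * hEm
  have c3 : PowerSeries.coeff (R := ℤ) N (Ep (N+1)^3)
      = PowerSeries.coeff (R := ℤ) N (Ep (N+1) * (Ep (N+1) * Ep N)) := by
    rw [e3, map_sub, PowerSeries.coeff_X_pow_mul', if_neg (by omega), sub_zero]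
  rw [c3]
  have lhs2 : PowerSeries.coeff (R := ℤ) N (Ep (N+1) * (∑ i ∈ range (2*(N+1)+1),
      ((2*(i:ℤ) - (2*(N+1)+1) : ℤ):Rz) * cf (N+1) i))
      = 2 * PowerSeries.coeff (R := ℤ) N (Ep (N+1) * (Ep (N+1) * Ep N)) := by
    rw [hmul]
    have h2 : ((2:ℤ):Rz) = 2 := by push_cast; rfl
    rw [← h2, coeff_intCast_mul]
  rw [← lhs2, Finset.mul_sum, map_sum]
  apply Finset.sum_congr rfl
  intro i hi
  exact term_eq N i (by simp at hi; omega)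

lemma tt_eq_iff (k : ℤ) (N : ℕ) : tt k = N ↔ k*(k+1) = 2*(N:ℤ) := by
  have h := tt_cast k
  constructor
  · intro hh; rw [← h, hh]; ring
  · intro hh; omega

lemma pent_inj {a b : ℤ} (h : a*(2*a+1) = b*(2*b+1)) : a = b := by
  have h2 : (a-b)*(2*a+2*b+1) = 0 := by linear_combination h
  rcases mul_eq_zero.mp h2 with h3 | h3 <;> omega

lemma final_sum (N : ℕ) :
    ∑ i ∈ range (2*(N+1)+1), (2*(i:ℤ) - (2*(N+1)+1)) * (-1:ℤ)^((N+1)+i)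
        * (if tt ((i:ℤ)-(N+1)) = N then 1 else 0)
    = 2 * ∑ n ∈ Icc (-(N:ℤ)-1) ((N:ℤ)+1), (if n*(2*n+1) = (N:ℤ) then 4*n+1 else 0) := by
  by_cases hex : ∃ n : ℤ, n*(2*n+1) = (N:ℤ)
  · obtain ⟨n₀, hn₀⟩ := hex
    have hub : 2*n₀ ≤ (N:ℤ) := by nlinarith
    have hlb : -(N:ℤ)-1 ≤ 2*n₀ := by nlinarith
    obtain ⟨i1, hi1⟩ : ∃ j:ℕ, (j:ℤ) = (N:ℤ)+1+2*n₀ :=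
      ⟨((N:ℤ)+1+2*n₀).toNat, Int.toNat_of_nonneg (by omega)⟩
    obtain ⟨i2, hi2⟩ : ∃ j:ℕ, (j:ℤ) = (N:ℤ)-2*n₀ :=
      ⟨((N:ℤ)-2*n₀).toNat, Int.toNat_of_nonneg (by omega)⟩
    have hne : i1 ≠ i2 := by omega
    have hmem1 : i1 ∈ range (2*(N+1)+1) := by simp; omega
    have hmem2 : i2 ∈ range (2*(N+1)+1) := by simp; omega
    have hsplit : ∀ i ∈ range (2*(N+1)+1),
        (2*(i:ℤ) - (2*(N+1)+1)) * (-1:ℤ)^((N+1)+i) * (if tt ((i:ℤ)-(N+1)) = N then 1 else 0)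
        = (if i = i1 then (4*n₀-1 : ℤ) else 0) + (if i = i2 then (4*n₀+3 : ℤ) else 0) := by
      intro i _
      by_cases e1 : i = i1
      · have hii : (i:ℤ) = (N:ℤ)+1+2*n₀ := by omega
        rw [if_pos e1, if_neg (show i ≠ i2 by omega)]
        have hcond : tt ((i:ℤ)-(N+1)) = N := by
          rw [tt_eq_iff, hii]
          linear_combination 2*hn₀
        rw [if_pos hcond]
        have hev : Even ((N+1)+i) := by
          have : Even (((N+1)+i : ℕ) : ℤ) := ⟨(N:ℤ)+1+n₀, by push_cast; omega⟩
          exact_mod_cast this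
        rw [hev.neg_one_pow, mul_one, mul_one]
        omega
      · by_cases e2 : i = i2
        · have hii : (i:ℤ) = (N:ℤ)-2*n₀ := by omega
          rw [if_neg e1, if_pos e2]
          have hcond : tt ((i:ℤ)-(N+1)) = N := by
            rw [tt_eq_iff, hii]
            linear_combination 2*hn₀
          rw [if_pos hcond]
          have hod : Odd ((N+1)+i) := by
            have : Odd (((N+1)+i : ℕ) : ℤ) := ⟨(N:ℤ)-n₀, by push_cast; omega⟩
            exact_mod_cast this
          rw [hod.neg_one_pow, mul_one]
          omega
        · rw [if_neg e1, if_neg e2]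
          have hcond : ¬ (tt ((i:ℤ)-(N+1)) = N) := by
            intro hc
            rw [tt_eq_iff] at hc
            have hfac : (((i:ℤ)-(N+1)) - 2*n₀) * (((i:ℤ)-(N+1)) + 2*n₀ + 1) = 0 := by
              linear_combination hc - 2*hn₀
            rcases mul_eq_zero.mp hfac with h3 | h3
            · exact e1 (by omega)
            · exact e2 (by omega)
          rw [if_neg hcond]
          ring
    rw [Finset.sum_congr rfl hsplit, Finset.sum_add_distrib,
      Finset.sum_ite_eq' (range (2*(N+1)+1)) i1 (fun _ => (4*n₀-1 : ℤ)),
      Finset.sum_ite_eq' (range (2*(N+1)+1)) i2 (fun _ => (4*n₀+3 : ℤ)),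
      if_pos hmem1, if_pos hmem2]
    have hmemn : n₀ ∈ Icc (-(N:ℤ)-1) ((N:ℤ)+1) := by simp [Finset.mem_Icc]; omega
    rw [Finset.sum_eq_single_of_mem n₀ hmemn]
    · rw [if_pos hn₀]; ring
    · intro b _ hbne
      rw [if_neg (fun hc => hbne (pent_inj (hc.trans hn₀.symm)))]
  · have h1 : ∀ i ∈ range (2*(N+1)+1),
        (2*(i:ℤ) - (2*(N+1)+1)) * (-1:ℤ)^((N+1)+i) * (if tt ((i:ℤ)-(N+1)) = N then 1 else 0) = 0 := by
      intro i _
      have hcond : ¬ (tt ((i:ℤ)-(N+1)) = N) := by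
        intro hc
        rw [tt_eq_iff] at hc
        rcases Int.even_or_odd ((i:ℤ)-(N+1)) with ⟨n, hn⟩ | ⟨n, hn⟩
        · exact hex ⟨n, by nlinarith⟩
        · exact hex ⟨-(n+1), by nlinarith⟩
      rw [if_neg hcond]; ring
    rw [Finset.sum_eq_zero h1]
    have h2 : ∀ n ∈ Icc (-(N:ℤ)-1) ((N:ℤ)+1), (if n*(2*n+1) = (N:ℤ) then 4*n+1 else 0) = (0:ℤ) := by
      intro n _
      rw [if_neg (fun hc => hex ⟨n, hc⟩)]
    rw [Finset.sum_eq_zero h2]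
    ring


/-- Jacobi's identity for the cube of the Euler product, coefficient by coefficient in
`ℤ⟦q⟧`: the coefficient of `q^N` in `∏_{n≥1} (1-q^n)^3` (the product truncated at any
stage beyond `N`, which determines the coefficient) equals `4n+1` if `N = n(2n+1)` for
the (unique) integer `n`, and `0` otherwise. -/
theorem stmt_0 (N : ℕ) :
    (PowerSeries.coeff (R := ℤ) N)
        (∏ n ∈ Finset.Icc 1 (N + 1), (1 - (PowerSeries.X : PowerSeries ℤ) ^ n) ^ 3) =
      ∑ n ∈ Finset.Icc (-(N : ℤ) - 1) ((N : ℤ) + 1),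
        if n * (2 * n + 1) = (N : ℤ) then 4 * n + 1 else 0 := by
  have hprod : ∏ n ∈ Finset.Icc 1 (N+1), (1 - (PowerSeries.X : PowerSeries ℤ)^n)^3
      = Ep (N+1)^3 := by
    rw [Finset.prod_pow]
    rfl
  rw [hprod]
  have h := coeff_combined N
  rw [final_sum N] at h
  exact mul_left_cancel₀ (by norm_num : (2:ℤ) ≠ 0) h

end
end

section
/- Any bounded holomorphic function $f$ on the upper half-plane that is invariant under the full modular group action $\tau \mapsto \frac{a\tau+b}{c\tau+d}$ for all $\begin{pmatrix}a&b\\c&d\end{pmatrix}\in SL_2(\mathbb{Z})$, and extends holomorphically to the cusp (i.e., $f(\tau) = g(e^{2\pi i \tau})$ with $g$ holomorphic at $0$), is constant. -/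
open Complex Matrix

section Helpers

private lemma norm_exp_two_pi (τ : ℂ) :
    ‖Complex.exp (2 * Real.pi * Complex.I * τ)‖ = Real.exp (-(2 * Real.pi * τ.im)) := by
  rw [Complex.norm_exp]
  congr 1
  simp [Complex.mul_re, Complex.mul_im]

private lemma exists_lift (q : ℂ) (hq : q ≠ 0) (h1 : ‖q‖ < 1) :
    ∃ τ : ℂ, 0 < τ.im ∧ Complex.exp (2 * Real.pi * Complex.I * τ) = q := by
  have hne : (2 * (Real.pi : ℂ) * Complex.I) ≠ 0 := by
    simp [Real.pi_ne_zero, Complex.I_ne_zero]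
  refine ⟨Complex.log q / (2 * Real.pi * Complex.I), ?_, ?_⟩
  · have him : (Complex.log q / (2 * (Real.pi:ℂ) * Complex.I)).im
        = -(Complex.log q).re / (2 * Real.pi) := by
      rw [Complex.div_im]
      simp [Complex.normSq_apply, Complex.mul_re, Complex.mul_im]
      field_simp
    rw [him, Complex.log_re]
    have h0 : Real.log ‖q‖ < 0 :=
      Real.log_neg (norm_pos_iff.mpr hq) h1
    have hp : (0:ℝ) < Real.pi := Real.pi_pos
    have : 0 < -Real.log ‖q‖ := by linarith
    positivity
  · rw [mul_div_cancel₀ _ hne, Complex.exp_log hq]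

private lemma g_diffAt (f g : ℂ → ℂ)
    (hol : ∀ τ : ℂ, 0 < τ.im → DifferentiableAt ℂ f τ)
    (cusp : ∀ τ : ℂ, 0 < τ.im → f τ = g (Complex.exp (2 * Real.pi * Complex.I * τ)))
    (q₀ : ℂ) (hq : q₀ ≠ 0) (h1 : ‖q₀‖ < 1) :
    DifferentiableAt ℂ g q₀ := by
  obtain ⟨τ₀, hτ₀, hexp⟩ := exists_lift q₀ hq h1
  have hne : (2 * (Real.pi : ℂ) * Complex.I) ≠ 0 := by
    simp [Real.pi_ne_zero, Complex.I_ne_zero]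
  set σ : ℂ → ℂ := fun q => τ₀ + Complex.log (q / q₀) / (2 * (Real.pi:ℂ) * Complex.I) with hσ
  have hσdiff : DifferentiableAt ℂ σ q₀ := by
    apply (differentiableAt_const _).add
    apply DifferentiableAt.div_const
    exact (differentiableAt_id.div_const q₀).clog
      (by rw [div_self hq]; exact Complex.one_mem_slitPlane)
  have hσq₀ : σ q₀ = τ₀ := by simp [hσ, div_self hq]
  have hev : g =ᶠ[nhds q₀] fun q => f (σ q) := by
    have h₁ : ∀ᶠ q in nhds q₀, q ≠ 0 := eventually_ne_nhds hq
    have h₂ : ∀ᶠ q in nhds q₀, 0 < (σ q).im := by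
      have hcont : ContinuousAt (fun q => (σ q).im) q₀ :=
        Complex.continuous_im.continuousAt.comp hσdiff.continuousAt
      have : 0 < (σ q₀).im := by rw [hσq₀]; exact hτ₀
      exact continuousAt_const.eventually_lt hcont this
    filter_upwards [h₁, h₂] with q hq0 him
    have hexpq : Complex.exp (2 * Real.pi * Complex.I * σ q) = q := by
      rw [hσ]
      simp only
      rw [mul_add, Complex.exp_add, mul_div_cancel₀ _ hne,
        Complex.exp_log (div_ne_zero hq0 hq), hexp, mul_div_cancel₀ _ hq]
    rw [cusp (σ q) him, hexpq]
  rw [Filter.EventuallyEq.differentiableAt_iff hev]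
  have : DifferentiableAt ℂ f (σ q₀) := by rw [hσq₀]; exact hol τ₀ hτ₀
  exact this.comp q₀ hσdiff

private lemma reduce (f : ℂ → ℂ)
    (inv : ∀ A : Matrix.SpecialLinearGroup (Fin 2) ℤ, ∀ τ : ℂ, 0 < τ.im →
      f ((((A : Matrix (Fin 2) (Fin 2) ℤ) 0 0 : ℤ) * τ + ((A : Matrix (Fin 2) (Fin 2) ℤ) 0 1 : ℤ)) /
        (((A : Matrix (Fin 2) (Fin 2) ℤ) 1 0 : ℤ) * τ + ((A : Matrix (Fin 2) (Fin 2) ℤ) 1 1 : ℤ))) = f τ)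
    (τ : ℂ) (hτ : 0 < τ.im) :
    ∃ τ' : ℂ, Real.sqrt 3 / 2 ≤ τ'.im ∧ 0 < τ'.im ∧ f τ' = f τ := by
  let z : UpperHalfPlane := ⟨τ, hτ⟩
  obtain ⟨A, hA⟩ := ModularGroup.exists_smul_mem_fd z
  refine ⟨((A • z : UpperHalfPlane) : ℂ), ?_, (A • z).2, ?_⟩
  · have h3 := ModularGroup.three_le_four_mul_im_sq_of_mem_fd hA
    have him : 0 < (A • z).im := (A • z).2
    have hs := Real.sqrt_le_sqrt (show (3:ℝ) ≤ (2 * (A • z).im)^2 by nlinarith)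
    rw [Real.sqrt_sq (by linarith)] at hs
    have : ((A • z : UpperHalfPlane) : ℂ).im = (A • z).im := rfl
    linarith [hs]
  · have hcoe : ((A • z : UpperHalfPlane) : ℂ) =
        (((A : Matrix (Fin 2) (Fin 2) ℤ) 0 0 : ℤ) * τ + ((A : Matrix (Fin 2) (Fin 2) ℤ) 0 1 : ℤ)) /
        (((A : Matrix (Fin 2) (Fin 2) ℤ) 1 0 : ℤ) * τ + ((A : Matrix (Fin 2) (Fin 2) ℤ) 1 1 : ℤ)) := by
      simp [ModularGroup.sl_moeb, UpperHalfPlane.coe_smul, UpperHalfPlane.num, UpperHalfPlane.denom]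
      rw [UpperHalfPlane.σ, if_pos (by simp)]
      rfl
    rw [hcoe, inv A τ hτ]

private lemma small_q : Real.exp (-(Real.pi * Real.sqrt 3)) ≤ 1/100 := by
  have h3 : Real.sqrt 3 ≥ 1.7 := by
    nlinarith [Real.sq_sqrt (by norm_num : (3:ℝ) ≥ 0), Real.sqrt_nonneg 3]
  have hpi : Real.pi > 3.14 := by have := Real.pi_gt_d6; linarith
  have h5 : (5:ℝ) ≤ Real.pi * Real.sqrt 3 := by nlinarith
  have : Real.exp (-(Real.pi * Real.sqrt 3)) ≤ Real.exp (-5) := by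
    apply Real.exp_le_exp.mpr; linarith
  refine this.trans ?_
  rw [show (-5:ℝ) = -(5:ℝ) from rfl, Real.exp_neg]
  rw [show ((1:ℝ)/100) = ((100:ℝ))⁻¹ by norm_num]
  apply inv_anti₀ (by norm_num)
  have h1 : (2.7182818283:ℝ) < Real.exp 1 := Real.exp_one_gt_d9
  have : Real.exp 5 = (Real.exp 1)^5 := by
    rw [← Real.exp_nat_mul]; norm_num
  rw [this]
  have h2 : (2.7:ℝ) ≤ Real.exp 1 := by linarith
  have h4 : (2.7:ℝ)^5 ≤ (Real.exp 1)^5 := pow_le_pow_left₀ (by norm_num) h2 5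
  nlinarith

end Helpers

/-- A bounded holomorphic function on the upper half-plane, invariant under the full
modular group `SL₂(ℤ)` acting by Möbius transformations, which extends holomorphically
to the cusp (`f(τ) = g(e^{2πiτ})` with `g` holomorphic at `0`), is constant. -/
theorem stmt_4 (f g : ℂ → ℂ)
    (hol : ∀ τ : ℂ, 0 < τ.im → DifferentiableAt ℂ f τ)
    (bdd : ∃ C : ℝ, ∀ τ : ℂ, 0 < τ.im → ‖f τ‖ ≤ C)
    (inv : ∀ A : Matrix.SpecialLinearGroup (Fin 2) ℤ, ∀ τ : ℂ, 0 < τ.im →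
      f ((((A : Matrix (Fin 2) (Fin 2) ℤ) 0 0 : ℤ) * τ + ((A : Matrix (Fin 2) (Fin 2) ℤ) 0 1 : ℤ)) /
        (((A : Matrix (Fin 2) (Fin 2) ℤ) 1 0 : ℤ) * τ + ((A : Matrix (Fin 2) (Fin 2) ℤ) 1 1 : ℤ))) = f τ)
    (hg : AnalyticAt ℂ g 0)
    (cusp : ∀ τ : ℂ, 0 < τ.im → f τ = g (Complex.exp (2 * Real.pi * Complex.I * τ))) :
    ∃ c : ℂ, ∀ τ : ℂ, 0 < τ.im → f τ = c := by
  obtain ⟨C, hC⟩ := bdd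
  set B₀ : ℝ := C + ‖g 0‖ with hB₀def
  have hB₀ : ∀ τ : ℂ, 0 < τ.im → ‖f τ - g 0‖ ≤ B₀ := fun τ hτ =>
    (norm_sub_le _ _).trans (by have := hC τ hτ; rw [hB₀def]; linarith)
  have hB₀0 : 0 ≤ B₀ := by
    have := (norm_nonneg (f Complex.I - g 0)).trans (hB₀ Complex.I (by simp))
    linarith
  have hdiff : DifferentiableOn ℂ g (Metric.ball (0:ℂ) (1/2)) := by
    intro q hqball
    rw [Metric.mem_ball, dist_eq_norm, sub_zero] at hqball
    rcases eq_or_ne q 0 with rfl | hq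
    · exact hg.differentiableAt.differentiableWithinAt
    · exact (g_diffAt f g hol cusp q hq (by linarith)).differentiableWithinAt
  have hval : ∀ q : ℂ, q ≠ 0 → ‖q‖ < 1 → ∃ τ : ℂ, 0 < τ.im ∧ g q = f τ := by
    intro q hq h1
    obtain ⟨τ, hτ, he⟩ := exists_lift q hq h1
    exact ⟨τ, hτ, by rw [cusp τ hτ, he]⟩
  have step : ∀ B : ℝ, 0 ≤ B → (∀ τ : ℂ, 0 < τ.im → ‖f τ - g 0‖ ≤ B) →
      ∀ τ : ℂ, 0 < τ.im → ‖f τ - g 0‖ ≤ B / 50 := by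
    intro B hB hbound τ hτ
    obtain ⟨τ', him, hτ'pos, hfeq⟩ := reduce f inv τ hτ
    set q' := Complex.exp (2 * Real.pi * Complex.I * τ') with hq'def
    have hq'norm : ‖q'‖ ≤ 1/100 := by
      rw [hq'def, norm_exp_two_pi]
      refine le_trans ?_ small_q
      apply Real.exp_le_exp.mpr
      have hpi := Real.pi_pos
      have h2 : Real.pi * Real.sqrt 3 ≤ 2 * Real.pi * τ'.im := by nlinarith
      linarith
    have hq'mem : q' ∈ Metric.ball (0:ℂ) (1/2) := by
      rw [Metric.mem_ball, dist_eq_norm, sub_zero]; linarith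
    have hfq' : f τ' = g q' := cusp τ' hτ'pos
    have key : ∀ ε : ℝ, 0 < ε → ‖f τ - g 0‖ ≤ B / 50 + ε := by
      intro ε hε
      have hmaps : Set.MapsTo g (Metric.ball (0:ℂ) (1/2)) (Metric.ball (g 0) (B + 50 * ε)) := by
        intro q hqm
        rw [Metric.mem_ball, dist_eq_norm] at hqm ⊢
        rw [sub_zero] at hqm
        rcases eq_or_ne q 0 with rfl | hq0
        · rw [sub_self, norm_zero]; linarith
        · obtain ⟨τ₁, hτ₁, hgq⟩ := hval q hq0 (by linarith)
          rw [hgq]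
          have := hbound τ₁ hτ₁
          linarith
      have hsch := Complex.dist_le_div_mul_dist_of_mapsTo_ball hdiff (hmaps.mono_right Metric.ball_subset_closedBall) hq'mem
      rw [dist_eq_norm, dist_eq_norm, sub_zero] at hsch
      have h1 : ‖f τ - g 0‖ = ‖g q' - g 0‖ := by rw [← hfeq, hfq']
      have h2 : (B + 50 * ε) / (1/2) * ‖q'‖ ≤ (B + 50 * ε) / (1/2) * (1/100) := by
        apply mul_le_mul_of_nonneg_left hq'norm
        positivity
      rw [h1]
      calc ‖g q' - g 0‖ ≤ (B + 50 * ε) / (1/2) * ‖q'‖ := hsch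
        _ ≤ (B + 50 * ε) / (1/2) * (1/100) := h2
        _ = B / 50 + ε := by ring
    exact le_of_forall_pos_le_add key
  have iter : ∀ n : ℕ, ∀ τ : ℂ, 0 < τ.im → ‖f τ - g 0‖ ≤ B₀ / 50 ^ n := by
    intro n
    induction n with
    | zero => simpa using hB₀
    | succ n ih =>
      intro τ hτ
      have h := step (B₀ / 50 ^ n) (by positivity) ih τ hτ
      calc ‖f τ - g 0‖ ≤ (B₀ / 50 ^ n) / 50 := h
        _ = B₀ / 50 ^ (n + 1) := by rw [div_div, pow_succ]
  refine ⟨g 0, fun τ hτ => ?_⟩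
  have hlim : Filter.Tendsto (fun n : ℕ => B₀ / 50 ^ n) Filter.atTop (nhds 0) := by
    have h := (tendsto_pow_atTop_nhds_zero_of_lt_one (by norm_num : (0:ℝ) ≤ 1/50)
      (by norm_num : (1/50 : ℝ) < 1)).const_mul B₀
    simpa [div_eq_mul_inv, inv_pow, div_pow] using h
  have hle : ‖f τ - g 0‖ ≤ 0 := ge_of_tendsto' hlim (fun n => iter n τ hτ)
  have : f τ - g 0 = 0 := norm_le_zero_iff.mp hle
  exact sub_eq_zero.mp this
end

section
/- Euler's pentagonal number theorem: $\prod_{n=1}^\infty (1-q^n) = \sum_{k \in \mathbb{Z}} (-1)^k q^{k(3k-1)/2}$ in $\mathbb{Z}[[q]]$. -/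
open PowerSeries Finset

namespace PentAux

/-- Gauss: `2 * ∑_{i ∈ Icc a b} i + a*(a-1) = (b+1)*b` when `a ≤ b+1`. -/
lemma sum_Icc_gauss (a b : ℕ) (h : a ≤ b + 1) :
    (∑ i ∈ Finset.Icc a b, i) * 2 + a * (a - 1) = (b + 1) * b := by
  have key : (∑ i ∈ Finset.range a, i) + ∑ i ∈ Finset.Icc a b, i
      = ∑ i ∈ Finset.range (b+1), i := by
    rw [Finset.range_eq_Ico, Finset.range_eq_Ico, ← Finset.Ico_add_one_right_eq_Icc]
    exact Finset.sum_Ico_consecutive (fun i => i) (Nat.zero_le a) (by omega)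
  have g1 := Finset.sum_range_id_mul_two a
  have g2 := Finset.sum_range_id_mul_two (b+1)
  simp only [Nat.add_sub_cancel] at g2
  omega

/-- shift of an interval sum -/
lemma sum_Icc_succ (a b : ℕ) :
    (∑ i ∈ Finset.Icc (a+1) (b+1), i) = (∑ i ∈ Finset.Icc a b, i) + (b + 1 - a) := by
  rcases le_or_gt a b with h | h
  · have : Finset.Icc (a+1) (b+1) = (Finset.Icc a b).image (· + 1) := by
      rw [Finset.image_add_right_Icc]
    rw [this, Finset.sum_image (by intro x _ y _ hxy; simp only at hxy; omega)]
    rw [Finset.sum_add_distrib, Finset.sum_const, Nat.card_Icc]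
    simp [Nat.smul_one_eq_cast]
  · rw [Finset.Icc_eq_empty (by omega), Finset.Icc_eq_empty (by omega)]
    simp
    omega

end PentAux

namespace PentAux2
open PentAux

/-- The gap just below the top run of consecutive elements. -/
def gap (S : Finset ℕ) (m : ℕ) : ℕ := Nat.findGreatest (· ∉ S) (m - 1)

/-- Auxiliary: Franklin's involution with max, min, gap supplied. -/
def frkAux (S : Finset ℕ) (m s g : ℕ) : Finset ℕ :=
  if s + g ≤ m ∧ 2 * s ≤ m then
    (S.filter (· ≤ m - s)).erase s ∪ Finset.Icc (m - s + 2) (m + 1)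
  else if m < 2 * g then
    S.filter (· ≤ g - 1) ∪ Finset.Icc g (m - 1) ∪ {m - g}
  else S

/-- Franklin's involution. -/
def frk (S : Finset ℕ) : Finset ℕ :=
  if hS : S.Nonempty then frkAux S (S.max' hS) (S.min' hS) (gap S (S.max' hS)) else S

lemma frk_eval {S : Finset ℕ} (hne : S.Nonempty) :
    frk S = frkAux S (S.max' hne) (S.min' hne) (gap S (S.max' hne)) := dif_pos hne

lemma max'_eq_of {S : Finset ℕ} (hne : S.Nonempty) {a : ℕ} (ha : a ∈ S)
    (h : ∀ x ∈ S, x ≤ a) : S.max' hne = a :=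
  le_antisymm (Finset.max'_le _ _ _ h) (Finset.le_max' _ _ ha)

lemma min'_eq_of {S : Finset ℕ} (hne : S.Nonempty) {a : ℕ} (ha : a ∈ S)
    (h : ∀ x ∈ S, a ≤ x) : S.min' hne = a :=
  le_antisymm (Finset.min'_le _ _ ha) (Finset.le_min' _ _ _ h)

lemma run_facts {S : Finset ℕ} (h0 : (0:ℕ) ∉ S) (hne : S.Nonempty) :
    gap S (S.max' hne) ∉ S ∧ gap S (S.max' hne) + 1 ≤ S.max' hne ∧
    ∀ x, gap S (S.max' hne) < x → x ≤ S.max' hne → x ∈ S := by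
  set m := S.max' hne with hm
  have hmS : m ∈ S := S.max'_mem hne
  have hm1 : 1 ≤ m := by
    rcases Nat.eq_zero_or_pos m with h | h
    · exact absurd (h ▸ hmS) h0
    · omega
  have hle : gap S m ≤ m - 1 := Nat.findGreatest_le _
  refine ⟨?_, by omega, ?_⟩
  · exact Nat.findGreatest_spec (P := (· ∉ S)) (Nat.zero_le (m-1)) h0
  · intro x hgx hxm
    rcases Nat.lt_or_ge (m - 1) x with h | h
    · have : x = m := by omega
      rwa [this]
    · by_contra hx
      have := Nat.le_findGreatest (P := (· ∉ S)) h hx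
      have : x ≤ gap S m := this
      omega





lemma frk_A {S : Finset ℕ} (h0 : (0:ℕ) ∉ S) (hne : S.Nonempty)
    (hA : S.min' hne + gap S (S.max' hne) ≤ S.max' hne ∧ 2 * S.min' hne ≤ S.max' hne) :
    (∑ i ∈ frk S, i) = (∑ i ∈ S, i) ∧ (0:ℕ) ∉ frk S ∧ S.card = (frk S).card + 1 ∧
      frk (frk S) = S := by
  obtain ⟨hgS, hgm, hrun⟩ := run_facts h0 hne
  set m := S.max' hne with hmdef
  set s := S.min' hne with hsdef
  set g := gap S m with hgdef
  obtain ⟨hA1, hA2⟩ := hA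
  have hmS : m ∈ S := S.max'_mem hne
  have hsS : s ∈ S := S.min'_mem hne
  have hub : ∀ x ∈ S, x ≤ m := fun x hx => S.le_max' x hx
  have hlb : ∀ x ∈ S, s ≤ x := fun x hx => S.min'_le x hx
  have hm1 : 1 ≤ m := Nat.pos_of_ne_zero (fun h => h0 (h ▸ hmS))
  have hs1 : 1 ≤ s := Nat.pos_of_ne_zero (fun h => h0 (h ▸ hsS))
  set L := S.filter (· ≤ m - s) with hLdef
  have hmemL : ∀ x, x ∈ L ↔ x ∈ S ∧ x ≤ m - s := by intro x; simp [hLdef]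
  have hsL : s ∈ L := (hmemL s).2 ⟨hsS, by omega⟩
  have hTsub : ∀ x, m - s + 1 ≤ x → x ≤ m → x ∈ S := fun x h1 h2 => hrun x (by omega) h2
  -- the evaluation of frk S
  have hfrk : frk S = L.erase s ∪ Finset.Icc (m - s + 2) (m + 1) := by
    rw [frk_eval hne, ← hmdef, ← hsdef, ← hgdef, frkAux, if_pos ⟨hA1, hA2⟩]
  set S' := L.erase s ∪ Finset.Icc (m - s + 2) (m + 1) with hS'def
  have hS'mem : ∀ x, x ∈ S' ↔ (x ∈ S ∧ x ≤ m - s ∧ x ≠ s) ∨ (m - s + 2 ≤ x ∧ x ≤ m + 1) := by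
    intro x
    simp only [hS'def, Finset.mem_union, Finset.mem_erase, hmemL, Finset.mem_Icc]
    tauto
  have hm1S' : m + 1 ∈ S' := by rw [hS'mem]; right; omega
  have hS'ne : S'.Nonempty := ⟨m + 1, hm1S'⟩
  have h0' : (0:ℕ) ∉ S' := by rw [hS'mem]; push_neg; exact ⟨fun h => absurd h h0, by omega⟩
  have hub' : ∀ x ∈ S', x ≤ m + 1 := by
    intro x hx; rw [hS'mem] at hx
    rcases hx with ⟨hxS, _, _⟩ | ⟨_, h⟩
    · have := hub x hxS; omega
    · exact h
  have hlb' : ∀ x ∈ S', s + 1 ≤ x := by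
    intro x hx; rw [hS'mem] at hx
    rcases hx with ⟨hxS, _, hxs⟩ | ⟨h, _⟩
    · have := hlb x hxS; omega
    · omega
  have hmax' : S'.max' hS'ne = m + 1 := max'_eq_of hS'ne hm1S' hub'
  have hminlb : s + 1 ≤ S'.min' hS'ne := Finset.le_min' _ _ _ hlb'
  have hgap' : gap S' (m + 1) = m - s + 1 := by
    rw [gap]
    rw [Nat.findGreatest_eq_iff]
    refine ⟨by omega, fun _ => ?_, fun n hn hn' => ?_⟩
    · rw [hS'mem]; push_neg
      exact ⟨fun h => by omega, by omega⟩
    · simp only [not_not]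
      rw [hS'mem]; right; omega
  -- cardinality and sum bookkeeping
  have hsplit : S = L ∪ Finset.Icc (m - s + 1) m := by
    ext x
    simp only [Finset.mem_union, hmemL, Finset.mem_Icc]
    have h1 := hub x
    have h2 := hTsub x
    by_cases hx : x ∈ S
    · simp only [hx, true_and, true_iff]
      have e1 := h1 hx
      omega
    · simp only [hx, false_and, false_or, false_iff]
      intro hc
      exact hx (h2 (by omega) (by omega))
  have hdisj : Disjoint L (Finset.Icc (m - s + 1) m) := by
    rw [Finset.disjoint_left]
    intro a haL haT
    rw [hmemL] at haL
    rw [Finset.mem_Icc] at haT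
    omega
  have hdisj' : Disjoint (L.erase s) (Finset.Icc (m - s + 2) (m + 1)) := by
    rw [Finset.disjoint_left]
    intro a haL haT
    have : a ∈ L := Finset.mem_of_mem_erase haL
    rw [hmemL] at this
    rw [Finset.mem_Icc] at haT
    omega
  have hcardT : (Finset.Icc (m - s + 1) m).card = s := by rw [Nat.card_Icc]; omega
  have hcardT' : (Finset.Icc (m - s + 2) (m + 1)).card = s := by rw [Nat.card_Icc]; omega
  have hcardS : S.card = L.card + s := by
    rw [hsplit, Finset.card_union_of_disjoint hdisj, hcardT]
  have hLpos : 1 ≤ L.card := Finset.card_pos.2 ⟨s, hsL⟩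
  have hcardS' : S'.card = (L.card - 1) + s := by
    rw [hS'def, Finset.card_union_of_disjoint hdisj', Finset.card_erase_of_mem hsL, hcardT']
  have hsumS : (∑ i ∈ S, i) = (∑ i ∈ L, i) + ∑ i ∈ Finset.Icc (m - s + 1) m, i := by
    rw [hsplit, Finset.sum_union hdisj]
  have hsumL : (∑ i ∈ L.erase s, i) + s = ∑ i ∈ L, i := Finset.sum_erase_add L _ hsL
  have hshift : (∑ i ∈ Finset.Icc (m - s + 1 + 1) (m + 1), i)
      = (∑ i ∈ Finset.Icc (m - s + 1) m, i) + (m + 1 - (m - s + 1)) := sum_Icc_succ _ _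
  have hbnd : m - s + 1 + 1 = m - s + 2 := by omega
  rw [hbnd] at hshift
  have hsumS' : (∑ i ∈ S', i) = (∑ i ∈ L.erase s, i) + ∑ i ∈ Finset.Icc (m - s + 2) (m + 1), i := by
    rw [hS'def, Finset.sum_union hdisj']
  refine ⟨by rw [hfrk]; omega, by rw [hfrk]; exact h0', by rw [hfrk]; omega, ?_⟩
  -- the involution property
  rw [hfrk, frk_eval hS'ne, hmax', hgap', frkAux, if_neg (by omega), if_pos (by omega)]
  ext x
  simp only [Finset.mem_union, Finset.mem_filter, hS'mem x, Finset.mem_Icc, Finset.mem_singleton]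
  have h1 := hub x
  have h2 := hlb x
  have h3 := hTsub x
  have h4 : s ∈ S := hsS
  by_cases hx : x ∈ S
  · simp only [hx, true_and, iff_true]
    have e1 := h1 hx
    have e2 := h2 hx
    omega
  · simp only [hx, false_and, false_or, iff_false]
    push_neg
    refine ⟨⟨fun h => by omega, fun hc1 => ?_⟩, fun hc => ?_⟩
    · by_contra hc2
      exact hx (h3 hc1 (by omega))
    · have hxs : x = s := by omega
      exact hx (hxs ▸ h4)
lemma frk_B {S : Finset ℕ} (h0 : (0:ℕ) ∉ S) (hne : S.Nonempty)
    (hnA : ¬(S.min' hne + gap S (S.max' hne) ≤ S.max' hne ∧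
      2 * S.min' hne ≤ S.max' hne))
    (hB : S.max' hne < 2 * gap S (S.max' hne)) :
    (∑ i ∈ frk S, i) = (∑ i ∈ S, i) ∧ (0:ℕ) ∉ frk S ∧ (frk S).card = S.card + 1 ∧
      frk (frk S) = S := by
  obtain ⟨hgS, hgm, hrun⟩ := run_facts h0 hne
  set m := S.max' hne with hmdef
  set s := S.min' hne with hsdef
  set g := gap S m with hgdef
  have hmS : m ∈ S := S.max'_mem hne
  have hsS : s ∈ S := S.min'_mem hne
  have hub : ∀ x ∈ S, x ≤ m := fun x hx => S.le_max' x hx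
  have hlb : ∀ x ∈ S, s ≤ x := fun x hx => S.min'_le x hx
  have hm1 : 1 ≤ m := Nat.pos_of_ne_zero (fun h => h0 (h ▸ hmS))
  have hs1 : 1 ≤ s := Nat.pos_of_ne_zero (fun h => h0 (h ▸ hsS))
  have hsg : s + g > m := by
    by_contra hc
    exact hnA ⟨by omega, by omega⟩
  have hm2 : 2 ≤ m := by omega
  set L := S.filter (· ≤ g - 1) with hLdef
  have hmemL : ∀ x, x ∈ L ↔ x ∈ S ∧ x ≤ g - 1 := by intro x; simp [hLdef]
  have hLlb : ∀ x ∈ L, m - g + 1 ≤ x := by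
    intro x hx
    rw [hmemL] at hx
    have := hlb x hx.1
    omega
  have hsplit : S = L ∪ Finset.Icc (g + 1) m := by
    ext x
    simp only [Finset.mem_union, hmemL, Finset.mem_Icc]
    have h1 := hub x
    have h2 := hrun x
    by_cases hx : x ∈ S
    · simp only [hx, true_and, true_iff]
      have e1 := h1 hx
      have e2 : x ≠ g := fun hc => hgS (hc ▸ hx)
      omega
    · simp only [hx, false_and, false_or, false_iff]
      intro hc
      exact hx (h2 (by omega) (by omega))
  have hfrk : frk S = L ∪ Finset.Icc g (m - 1) ∪ {m - g} := by
    rw [frk_eval hne, ← hmdef, ← hsdef, ← hgdef, frkAux, if_neg hnA, if_pos hB]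
  set S' := L ∪ Finset.Icc g (m - 1) ∪ {m - g} with hS'def
  have hS'mem : ∀ x, x ∈ S' ↔ (x ∈ S ∧ x ≤ g - 1) ∨ (g ≤ x ∧ x ≤ m - 1) ∨ x = m - g := by
    intro x
    simp only [hS'def, Finset.mem_union, hmemL, Finset.mem_Icc, Finset.mem_singleton]
    tauto
  have hmgS' : m - g ∈ S' := by rw [hS'mem]; right; right; rfl
  have hS'ne : S'.Nonempty := ⟨m - g, hmgS'⟩
  have h0' : (0:ℕ) ∉ S' := by
    rw [hS'mem]; push_neg
    refine ⟨fun h => absurd h h0, fun h => by omega, by omega⟩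
  have hub' : ∀ x ∈ S', x ≤ m - 1 := by
    intro x hx; rw [hS'mem] at hx
    rcases hx with ⟨hxS, hle⟩ | ⟨h1, h2⟩ | h
    · omega
    · omega
    · omega
  have hlb' : ∀ x ∈ S', m - g ≤ x := by
    intro x hx; rw [hS'mem] at hx
    rcases hx with ⟨hxS, hle⟩ | ⟨h1, h2⟩ | h
    · have := hlb x hxS; omega
    · omega
    · omega
  have hmax' : S'.max' hS'ne = m - 1 := max'_eq_of hS'ne (by rw [hS'mem]; right; left; omega) hub'
  have hmin' : S'.min' hS'ne = m - g := min'_eq_of hS'ne hmgS' hlb'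
  have hgapub : gap S' (m - 1) ≤ g - 1 := by
    by_contra hc
    push_neg at hc
    have h1 : gap S' (m - 1) ∉ S' :=
      Nat.findGreatest_spec (P := (· ∉ S')) (Nat.zero_le _) h0'
    have h2 : gap S' (m - 1) ≤ m - 1 - 1 := Nat.findGreatest_le _
    exact h1 ((hS'mem _).2 (Or.inr (Or.inl ⟨by omega, by omega⟩)))
  -- bookkeeping
  have hdisj : Disjoint L (Finset.Icc (g + 1) m) := by
    rw [Finset.disjoint_left]
    intro a haL haT
    rw [hmemL] at haL
    rw [Finset.mem_Icc] at haT
    omega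
  have hdisj1 : Disjoint L (Finset.Icc g (m - 1)) := by
    rw [Finset.disjoint_left]
    intro a haL haT
    rw [hmemL] at haL
    rw [Finset.mem_Icc] at haT
    omega
  have hdisj2 : Disjoint (L ∪ Finset.Icc g (m - 1)) ({m - g} : Finset ℕ) := by
    rw [Finset.disjoint_left]
    intro a haL haT
    rw [Finset.mem_singleton] at haT
    rw [Finset.mem_union, hmemL, Finset.mem_Icc] at haL
    rcases haL with ⟨haS, _⟩ | ⟨h1, h2⟩
    · have := hlb a haS; omega
    · omega
  have hcardT : (Finset.Icc (g + 1) m).card = m - g := by rw [Nat.card_Icc]; omega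
  have hcardT' : (Finset.Icc g (m - 1)).card = m - g := by rw [Nat.card_Icc]; omega
  have hcardS : S.card = L.card + (m - g) := by
    rw [hsplit, Finset.card_union_of_disjoint hdisj, hcardT]
  have hcardS' : S'.card = L.card + (m - g) + 1 := by
    rw [hS'def, Finset.card_union_of_disjoint hdisj2, Finset.card_union_of_disjoint hdisj1,
      hcardT', Finset.card_singleton]
  have hsumS : (∑ i ∈ S, i) = (∑ i ∈ L, i) + ∑ i ∈ Finset.Icc (g + 1) m, i := by
    rw [hsplit, Finset.sum_union hdisj]
  have hshift : (∑ i ∈ Finset.Icc (g + 1) (m - 1 + 1), i)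
      = (∑ i ∈ Finset.Icc g (m - 1), i) + (m - 1 + 1 - g) := sum_Icc_succ _ _
  rw [show m - 1 + 1 = m from by omega] at hshift
  have hsumS' : (∑ i ∈ S', i)
      = ((∑ i ∈ L, i) + ∑ i ∈ Finset.Icc g (m - 1), i) + (m - g) := by
    rw [hS'def, Finset.sum_union hdisj2, Finset.sum_union hdisj1, Finset.sum_singleton]
  refine ⟨by rw [hfrk]; omega, by rw [hfrk]; exact h0',
    by rw [hfrk]; omega, ?_⟩
  -- the involution property
  rw [hfrk, frk_eval hS'ne, hmax', hmin', frkAux, if_pos (by constructor <;> omega)]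
  ext x
  simp only [Finset.mem_union, Finset.mem_erase, Finset.mem_filter, hS'mem x, Finset.mem_Icc]
  have h1 := hub x
  have h2 := hlb x
  have h3 := hrun x
  by_cases hx : x ∈ S
  · simp only [hx, true_and, iff_true]
    have e1 := h1 hx
    have e2 := h2 hx
    have e3 : x ≠ g := fun hc => hgS (hc ▸ hx)
    omega
  · simp only [hx, false_and, false_or, iff_false]
    push_neg
    refine ⟨fun h4 h5 => by omega, fun h4 => ?_⟩
    by_contra h5
    push_neg at h5
    exact hx (h3 (by omega) (by omega))

/-- Pentagonal (Franklin-fixed) finsets. -/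
def isPent (S : Finset ℕ) : Prop :=
  ∃ k, 1 ≤ k ∧ (S = Finset.Icc k (2*k-1) ∨ S = Finset.Icc (k+1) (2*k))

lemma fixed_shape {S : Finset ℕ} (h0 : (0:ℕ) ∉ S) (hne : S.Nonempty)
    (hnA : ¬(S.min' hne + gap S (S.max' hne) ≤ S.max' hne ∧
      2 * S.min' hne ≤ S.max' hne))
    (hnB : ¬(S.max' hne < 2 * gap S (S.max' hne))) : isPent S := by
  obtain ⟨hgS, hgm, hrun⟩ := run_facts h0 hne
  set m := S.max' hne with hmdef
  set s := S.min' hne with hsdef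
  set g := gap S m with hgdef
  have hmS : m ∈ S := S.max'_mem hne
  have hsS : s ∈ S := S.min'_mem hne
  have hub : ∀ x ∈ S, x ≤ m := fun x hx => S.le_max' x hx
  have hlb : ∀ x ∈ S, s ≤ x := fun x hx => S.min'_le x hx
  have hm1 : 1 ≤ m := Nat.pos_of_ne_zero (fun h => h0 (h ▸ hmS))
  have hs1 : 1 ≤ s := Nat.pos_of_ne_zero (fun h => h0 (h ▸ hsS))
  push_neg at hnB
  have hsg : s ≠ g := fun hc => hgS (hc ▸ hsS)
  have hsgt : g + 1 ≤ s := by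
    by_contra hc
    push_neg at hc
    have hslt : s < g := by omega
    rcases not_and_or.1 hnA with h | h <;> omega
  have hIcc : S = Finset.Icc s m := by
    ext x
    rw [Finset.mem_Icc]
    constructor
    · intro hx; exact ⟨hlb x hx, hub x hx⟩
    · intro ⟨h1, h2⟩; exact hrun x (by omega) h2
  have hgs1 : g = s - 1 := by
    by_contra hc
    have h1 : g ≤ s - 1 := by
      by_contra h2
      push_neg at h2
      have : g ∈ S := by rw [hIcc, Finset.mem_Icc]; omega
      exact hgS this
    have h2 : s - 1 ∈ S := hrun (s-1) (by omega) (le_trans (Nat.sub_le s 1) (hub s hsS))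
    rw [hIcc, Finset.mem_Icc] at h2
    omega
  have hcases : m = 2*s - 1 ∨ m = 2*s - 2 := by
    rcases not_and_or.1 hnA with h | h <;> omega
  rcases hcases with h | h
  · exact ⟨s, hs1, Or.inl (by rw [hIcc, ← h])⟩
  · refine ⟨s - 1, by omega, Or.inr ?_⟩
    rw [hIcc]
    have e1 : s - 1 + 1 = s := by omega
    have e2 : 2 * (s - 1) = m := by omega
    rw [e1, e2]

lemma frk_pent {S : Finset ℕ} (h : isPent S) : frk S = S := by
  obtain ⟨k, hk, h | h⟩ := h
  · subst h
    have hne : (Finset.Icc k (2*k-1)).Nonempty := Finset.nonempty_Icc.2 (by omega)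
    have h0 : (0:ℕ) ∉ Finset.Icc k (2*k-1) := by rw [Finset.mem_Icc]; omega
    obtain ⟨hgS, hgm, hrun⟩ := run_facts h0 hne
    have hmax : (Finset.Icc k (2*k-1)).max' hne = 2*k-1 :=
      max'_eq_of hne (Finset.mem_Icc.2 ⟨by omega, le_refl _⟩)
        (fun x hx => (Finset.mem_Icc.1 hx).2)
    have hminlb : k ≤ (Finset.Icc k (2*k-1)).min' hne :=
      (Finset.mem_Icc.1 ((Finset.Icc k (2*k-1)).min'_mem hne)).1
    rw [hmax] at hgS hgm
    have hgub : gap (Finset.Icc k (2*k-1)) (2*k-1) ≤ k - 1 := by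
      by_contra hc
      push_neg at hc
      exact hgS (Finset.mem_Icc.2 ⟨by omega, by omega⟩)
    rw [frk_eval hne, hmax, frkAux, if_neg (by push_neg; intro _; omega),
      if_neg (by omega)]
  · subst h
    have hne : (Finset.Icc (k+1) (2*k)).Nonempty := Finset.nonempty_Icc.2 (by omega)
    have h0 : (0:ℕ) ∉ Finset.Icc (k+1) (2*k) := by rw [Finset.mem_Icc]; omega
    obtain ⟨hgS, hgm, hrun⟩ := run_facts h0 hne
    have hmax : (Finset.Icc (k+1) (2*k)).max' hne = 2*k :=
      max'_eq_of hne (Finset.mem_Icc.2 ⟨by omega, le_refl _⟩)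
        (fun x hx => (Finset.mem_Icc.1 hx).2)
    have hminlb : k + 1 ≤ (Finset.Icc (k+1) (2*k)).min' hne :=
      (Finset.mem_Icc.1 ((Finset.Icc (k+1) (2*k)).min'_mem hne)).1
    rw [hmax] at hgS hgm
    have hgub : gap (Finset.Icc (k+1) (2*k)) (2*k) ≤ k := by
      by_contra hc
      push_neg at hc
      exact hgS (Finset.mem_Icc.2 ⟨by omega, by omega⟩)
    rw [frk_eval hne, hmax, frkAux, if_neg (by push_neg; intro _; omega),
      if_neg (by omega)]

lemma frk_spec {S : Finset ℕ} (h0 : (0:ℕ) ∉ S) (hne : S.Nonempty) (hP : ¬ isPent S) :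
    (∑ i ∈ frk S, i) = (∑ i ∈ S, i) ∧ (0:ℕ) ∉ frk S ∧
    (S.card = (frk S).card + 1 ∨ (frk S).card = S.card + 1) ∧ frk (frk S) = S := by
  by_cases hA : S.min' hne + gap S (S.max' hne) ≤ S.max' hne ∧ 2 * S.min' hne ≤ S.max' hne
  · obtain ⟨a, b, c, d⟩ := frk_A h0 hne hA
    exact ⟨a, b, Or.inl c, d⟩
  · by_cases hB : S.max' hne < 2 * gap S (S.max' hne)
    · obtain ⟨a, b, c, d⟩ := frk_B h0 hne hA hB
      exact ⟨a, b, Or.inr c, d⟩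
    · exact absurd (fixed_shape h0 hne hA hB) hP

lemma pent_inj {k l : ℤ} (h : k * (3*k - 1) = l * (3*l - 1)) : k = l := by
  have h2 : (k - l) * (3*(k + l) - 1) = 0 := by linear_combination h
  rcases mul_eq_zero.1 h2 with h3 | h3 <;> omega

lemma sum_pent1 (k : ℕ) (hk : 1 ≤ k) :
    (∑ i ∈ Finset.Icc k (2*k-1), i) * 2 = k * (3*k - 1) := by
  have h := sum_Icc_gauss k (2*k-1) (by omega)
  zify [show 1 ≤ 3*k from by omega, show 1 ≤ k from hk, show k ≤ 2*k-1+1 from by omega,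
    show 1 ≤ 2*k from by omega] at h ⊢
  linear_combination h

lemma sum_pent2 (k : ℕ) (hk : 1 ≤ k) :
    (∑ i ∈ Finset.Icc (k+1) (2*k), i) * 2 = k * (3*k + 1) := by
  have h := sum_Icc_gauss (k+1) (2*k) (by omega)
  simp only [Nat.add_sub_cancel] at h
  zify at h ⊢
  linear_combination h

lemma rhs_eval (N : ℕ) (k₀ : ℤ) (hk₀ : k₀ * (3*k₀ - 1) = 2*(N:ℤ)) :
    (∑ k ∈ Finset.Icc (-(N:ℤ) - 1) ((N:ℤ) + 1),
      if k * (3*k - 1) = 2*(N:ℤ) then (-1:ℤ)^k.natAbs else 0) = (-1)^k₀.natAbs := by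
  have hmem : k₀ ∈ Finset.Icc (-(N:ℤ) - 1) ((N:ℤ) + 1) := by
    rw [Finset.mem_Icc]
    constructor
    · nlinarith [sq_nonneg (6*k₀+1)]
    · nlinarith [sq_nonneg (2*k₀-1)]
  rw [Finset.sum_eq_single_of_mem k₀ hmem ?_]
  · rw [if_pos hk₀]
  · intro b _ hbne
    rw [if_neg (fun hc => hbne (pent_inj (hc.trans hk₀.symm)))]

lemma rhs_zero (N : ℕ) (hex : ¬ ∃ k : ℤ, k * (3*k - 1) = 2*(N:ℤ)) :
    (∑ k ∈ Finset.Icc (-(N:ℤ) - 1) ((N:ℤ) + 1),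
      if k * (3*k - 1) = 2*(N:ℤ) then (-1:ℤ)^k.natAbs else 0) = 0 :=
  Finset.sum_eq_zero (fun k _ => if_neg (fun hc => hex ⟨k, hc⟩))

lemma coeff_prod (N : ℕ) :
    (PowerSeries.coeff (R := ℤ) N)
        (∏ n ∈ Finset.Icc 1 (N + 1), (1 - (PowerSeries.X : PowerSeries ℤ) ^ n)) =
      ∑ S ∈ (Finset.Icc 1 (N+1)).powerset.filter (fun S => (∑ i ∈ S, i) = N),
        (-1:ℤ)^S.card := by
  classical
  have h1 : (∏ n ∈ Finset.Icc 1 (N+1), (1 - (PowerSeries.X : PowerSeries ℤ)^n))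
      = ∑ S ∈ (Finset.Icc 1 (N+1)).powerset,
          (PowerSeries.C (R := ℤ) ((-1:ℤ)^S.card)) * PowerSeries.X^(∑ i ∈ S, i) := by
    have hc : ∀ n ∈ Finset.Icc 1 (N+1), (1 - (PowerSeries.X : PowerSeries ℤ)^n)
        = (-PowerSeries.X^n) + 1 := fun n _ => by ring
    rw [Finset.prod_congr rfl hc, Finset.prod_add]
    refine Finset.sum_congr rfl (fun S hS => ?_)
    rw [Finset.prod_const_one, mul_one]
    have h2 : ∀ n ∈ S, (-PowerSeries.X^n : PowerSeries ℤ)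
        = (PowerSeries.C (R := ℤ) (-1)) * PowerSeries.X^n := fun n _ => by simp
    rw [Finset.prod_congr rfl h2, Finset.prod_mul_distrib, Finset.prod_const,
      Finset.prod_pow_eq_pow_sum, ← map_pow]
  rw [h1, map_sum]
  rw [Finset.sum_filter]
  refine Finset.sum_congr rfl (fun S hS => ?_)
  rw [PowerSeries.coeff_C_mul, PowerSeries.coeff_X_pow]
  by_cases h : (∑ i ∈ S, i) = N
  · rw [if_pos h, if_pos h.symm, mul_one]
  · rw [if_neg h, if_neg (fun hc => h hc.symm), mul_zero]

end PentAux2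

open PentAux PentAux2

/-- Euler's pentagonal number theorem in `ℤ⟦q⟧`, coefficient by coefficient:
the coefficient of `q^N` in `∏_{n≥1}(1-qⁿ)` is `(-1)^k` if `N = k(3k-1)/2` for a
(unique) integer `k`, and `0` otherwise. -/
theorem stmt_16 (N : ℕ) :
    (PowerSeries.coeff (R := ℤ) N)
        (∏ n ∈ Finset.Icc 1 (N + 1), (1 - (PowerSeries.X : PowerSeries ℤ) ^ n)) =
      ∑ k ∈ Finset.Icc (-(N : ℤ) - 1) ((N : ℤ) + 1),
        if k * (3 * k - 1) = 2 * (N : ℤ) then (-1 : ℤ) ^ k.natAbs else 0 := by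
  classical
  rw [coeff_prod]
  set D := (Finset.Icc 1 (N+1)).powerset.filter (fun S => (∑ i ∈ S, i) = N) with hD
  by_cases hN : N = 0
  · subst hN
    have hD0 : D = {∅} := by
      ext S
      rw [hD, Finset.mem_filter, Finset.mem_powerset, Finset.mem_singleton]
      constructor
      · rintro ⟨hsub, hsum⟩
        by_contra hSne
        obtain ⟨x, hx⟩ := Finset.nonempty_iff_ne_empty.2 hSne
        have h1 : 1 ≤ x := (Finset.mem_Icc.1 (hsub hx)).1
        have h2 : x ≤ ∑ i ∈ S, i :=
          Finset.single_le_sum (f := fun i => i) (fun i _ => Nat.zero_le i) hx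
        omega
      · rintro rfl
        exact ⟨Finset.empty_subset _, Finset.sum_empty⟩
    rw [hD0, Finset.sum_singleton, Finset.card_empty, pow_zero]
    rw [rhs_eval 0 0 (by norm_num)]
    norm_num
  -- now N ≥ 1
  have hN1 : 1 ≤ N := by omega
  have hDmem : ∀ S, S ∈ D ↔ ((0:ℕ) ∉ S ∧ (∑ i ∈ S, i) = N) := by
    intro S
    rw [hD, Finset.mem_filter, Finset.mem_powerset]
    constructor
    · rintro ⟨hsub, hsum⟩
      refine ⟨fun h0 => ?_, hsum⟩
      have := (Finset.mem_Icc.1 (hsub h0)).1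
      omega
    · rintro ⟨h0, hsum⟩
      refine ⟨fun x hx => Finset.mem_Icc.2 ⟨?_, ?_⟩, hsum⟩
      · rcases Nat.eq_zero_or_pos x with rfl | h
        · exact absurd hx h0
        · omega
      · have h2 : x ≤ ∑ i ∈ S, i :=
          Finset.single_le_sum (f := fun i => i) (fun i _ => Nat.zero_le i) hx
        omega
  have hne_of_mem : ∀ S, S ∈ D → S.Nonempty := by
    intro S hS
    rw [Finset.nonempty_iff_ne_empty]
    rintro rfl
    rw [hDmem] at hS
    simp at hS
    omega
  rw [← Finset.sum_filter_add_sum_filter_not D (fun S => isPent S) (fun S => (-1:ℤ)^S.card)]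
  have hnot : ∑ S ∈ D.filter (fun S => ¬ isPent S), (-1:ℤ)^S.card = 0 := by
    refine Finset.sum_involution (fun S _ => frk S) ?_ ?_ ?_ ?_
    · -- f S + f (frk S) = 0
      intro S hS
      rw [Finset.mem_filter] at hS
      obtain ⟨hSD, hSP⟩ := hS
      obtain ⟨hsum, h0', hcard, hinv⟩ :=
        frk_spec ((hDmem S).1 hSD).1 (hne_of_mem S hSD) hSP
      rcases hcard with h | h
      · rw [h, pow_succ]; ring
      · rw [h, pow_succ]; ring
    · -- g a ≠ a
      intro S hS _
      rw [Finset.mem_filter] at hS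
      obtain ⟨hSD, hSP⟩ := hS
      obtain ⟨hsum, h0', hcard, hinv⟩ :=
        frk_spec ((hDmem S).1 hSD).1 (hne_of_mem S hSD) hSP
      intro hc
      replace hc : frk S = S := hc
      rw [hc] at hcard
      omega
    · -- membership
      intro S hS
      rw [Finset.mem_filter] at hS ⊢
      obtain ⟨hSD, hSP⟩ := hS
      obtain ⟨hsum, h0', hcard, hinv⟩ :=
        frk_spec ((hDmem S).1 hSD).1 (hne_of_mem S hSD) hSP
      have hfD : frk S ∈ D := (hDmem _).2 ⟨h0', hsum.trans ((hDmem S).1 hSD).2⟩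
      refine ⟨hfD, fun hP' => ?_⟩
      replace hP' : isPent (frk S) := hP'
      have h1 := frk_pent hP'
      rw [h1] at hinv
      rw [hinv] at hcard
      omega
    · -- involution
      intro S hS
      rw [Finset.mem_filter] at hS
      obtain ⟨hSD, hSP⟩ := hS
      exact (frk_spec ((hDmem S).1 hSD).1 (hne_of_mem S hSD) hSP).2.2.2
  rw [hnot, add_zero]
  by_cases hex : ∃ k : ℤ, k * (3*k - 1) = 2*(N:ℤ)
  · obtain ⟨k₀, hk₀⟩ := hex
    have hk₀ne : k₀ ≠ 0 := by
      rintro rfl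
      norm_num at hk₀
      omega
    rw [rhs_eval N k₀ hk₀]
    rcases lt_or_gt_of_ne hk₀ne with hneg | hpos
    · -- k₀ < 0 : the fixed point is Icc (j+1) (2j)
      set j : ℕ := (-k₀).toNat with hj
      have hjZ : (j:ℤ) = -k₀ := Int.toNat_of_nonneg (by omega)
      have hj1 : 1 ≤ j := by omega
      have hjN : j * (3*j + 1) = 2*N := by
        zify
        linear_combination (3*(j:ℤ) - 3*k₀ + 1) * hjZ + hk₀
      have hfilter : D.filter (fun S => isPent S) = {Finset.Icc (j+1) (2*j)} := by
        ext S
        rw [Finset.mem_filter, Finset.mem_singleton]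
        constructor
        · rintro ⟨hSD, l, hl, hcase | hcase⟩
          · exfalso
            have hsum := ((hDmem S).1 hSD).2
            rw [hcase] at hsum
            have := sum_pent1 l hl
            have hnat : l * (3*l - 1) = 2*N := by omega
            have hZ : (l:ℤ) * (3*(l:ℤ) - 1) = 2*(N:ℤ) := by
              zify [show 1 ≤ 3*l from by omega] at hnat
              exact hnat
            have := pent_inj (hZ.trans hk₀.symm)
            omega
          · have hsum := ((hDmem S).1 hSD).2
            rw [hcase] at hsum
            have := sum_pent2 l hl
            have hnat : l * (3*l + 1) = 2*N := by omega
            have hZ : (-(l:ℤ)) * (3*(-(l:ℤ)) - 1) = 2*(N:ℤ) := by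
              zify at hnat
              linear_combination hnat
            have hlk := pent_inj (hZ.trans hk₀.symm)
            have : l = j := by omega
            rw [hcase, this]
        · rintro rfl
          have hsum : (∑ i ∈ Finset.Icc (j+1) (2*j), i) = N := by
            have := sum_pent2 j hj1
            omega
          have h0 : (0:ℕ) ∉ Finset.Icc (j+1) (2*j) := by rw [Finset.mem_Icc]; omega
          exact ⟨(hDmem _).2 ⟨h0, hsum⟩, j, hj1, Or.inr rfl⟩
      rw [hfilter, Finset.sum_singleton, Nat.card_Icc]
      have hcard : 2*j + 1 - (j+1) = j := by omega
      rw [hcard]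
      have : k₀.natAbs = j := by omega
      rw [this]
    · -- k₀ > 0 : the fixed point is Icc k (2k-1)
      set k : ℕ := k₀.toNat with hk
      have hkZ : (k:ℤ) = k₀ := Int.toNat_of_nonneg (by omega)
      have hk1 : 1 ≤ k := by omega
      have hkN : k * (3*k - 1) = 2*N := by
        zify [show 1 ≤ 3*k from by omega]
        rw [hkZ]
        exact hk₀
      have hfilter : D.filter (fun S => isPent S) = {Finset.Icc k (2*k-1)} := by
        ext S
        rw [Finset.mem_filter, Finset.mem_singleton]
        constructor
        · rintro ⟨hSD, l, hl, hcase | hcase⟩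
          · have hsum := ((hDmem S).1 hSD).2
            rw [hcase] at hsum
            have := sum_pent1 l hl
            have hnat : l * (3*l - 1) = 2*N := by omega
            have hZ : (l:ℤ) * (3*(l:ℤ) - 1) = 2*(N:ℤ) := by
              zify [show 1 ≤ 3*l from by omega] at hnat
              exact hnat
            have hlk := pent_inj (hZ.trans hk₀.symm)
            have : l = k := by omega
            rw [hcase, this]
          · exfalso
            have hsum := ((hDmem S).1 hSD).2
            rw [hcase] at hsum
            have := sum_pent2 l hl
            have hnat : l * (3*l + 1) = 2*N := by omega
            have hZ : (-(l:ℤ)) * (3*(-(l:ℤ)) - 1) = 2*(N:ℤ) := by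
              zify at hnat
              linear_combination hnat
            have := pent_inj (hZ.trans hk₀.symm)
            omega
        · rintro rfl
          have hsum : (∑ i ∈ Finset.Icc k (2*k-1), i) = N := by
            have := sum_pent1 k hk1
            omega
          have h0 : (0:ℕ) ∉ Finset.Icc k (2*k-1) := by rw [Finset.mem_Icc]; omega
          exact ⟨(hDmem _).2 ⟨h0, hsum⟩, k, hk1, Or.inl rfl⟩
      rw [hfilter, Finset.sum_singleton, Nat.card_Icc]
      have hcard : 2*k - 1 + 1 - k = k := by omega
      rw [hcard]
      have : k₀.natAbs = k := by omega
      rw [this]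
  · rw [rhs_zero N hex]
    have hfilter : D.filter (fun S => isPent S) = ∅ := by
      rw [Finset.filter_eq_empty_iff]
      rintro S hSD ⟨l, hl, hcase | hcase⟩
      · have hsum := ((hDmem S).1 hSD).2
        rw [hcase] at hsum
        have := sum_pent1 l hl
        have hnat : l * (3*l - 1) = 2*N := by omega
        refine hex ⟨(l:ℤ), ?_⟩
        zify [show 1 ≤ 3*l from by omega] at hnat
        exact hnat
      · have hsum := ((hDmem S).1 hSD).2
        rw [hcase] at hsum
        have := sum_pent2 l hl
        have hnat : l * (3*l + 1) = 2*N := by omega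
        refine hex ⟨-(l:ℤ), ?_⟩
        zify at hnat
        linear_combination hnat
    rw [hfilter, Finset.sum_empty]
end
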